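/- An S-act A is strongly co-Hopfian if and only if for every S-endomorphism f of A there exists n ≥ 1 such that the join of congruences I_{f^n} ∨ K_{f^n} equals A × A. -/
import Mathlib


structure RAct (S : Type*) [Monoid S] (A : Type*) where
  act : A → S → A
  act_one : ∀ a, act a 1 = a
  act_mul : ∀ a s t, act a (s * t) = act (act a s) t

variable {S : Type*} [Monoid S] {A B : Type*}

/-- `f` is an S-act homomorphism from `M` to `N`. -/
def IsHom (M : RAct S A) (N : RAct S B) (f : A → B) : Prop :=
  ∀ a s, f (M.act a s) = N.act (f a) s

/-- `f` is an S-act endomorphism of `M`. -/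
def IsEnd (M : RAct S A) (f : A → A) : Prop := IsHom M M f

/-- `r` is a congruence on the S-act `M`. -/
def IsCong (M : RAct S A) (r : A → A → Prop) : Prop :=
  Equivalence r ∧ ∀ a b s, r a b → r (M.act a s) (M.act b s)

/-- The kernel congruence `K_f`. -/
def kerC {A : Type*} (f : A → A) : A → A → Prop := fun a b => f a = f b

/-- The image congruence `I_f = (im f × im f) ∪ Δ`. -/
def imC {A : Type*} (f : A → A) : A → A → Prop :=
  fun a b => a = b ∨ (a ∈ Set.range f ∧ b ∈ Set.range f)

/-- The diagonal relation. -/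
def diagR (A : Type*) : A → A → Prop := fun a b => a = b

/-- The full relation. -/
def fullR (A : Type*) : A → A → Prop := fun _ _ => True

/-- `M` is strongly Hopfian: the chain `K_f ⊆ K_{f²} ⊆ ⋯` stabilizes for every endomorphism. -/
def StronglyHopfian (M : RAct S A) : Prop :=
  ∀ f : A → A, IsEnd M f → ∃ n : ℕ, 1 ≤ n ∧ ∀ m, n ≤ m → kerC (f^[m]) = kerC (f^[n])

/-- `M` is strongly co-Hopfian: the chain `I_f ⊇ I_{f²} ⊇ ⋯` stabilizes for every endomorphism. -/
def StronglyCoHopfian (M : RAct S A) : Prop :=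
  ∀ f : A → A, IsEnd M f → ∃ n : ℕ, 1 ≤ n ∧ ∀ m, n ≤ m → imC (f^[m]) = imC (f^[n])

/-- `M` is Hopfian: every surjective endomorphism is injective. -/
def Hopfian (M : RAct S A) : Prop :=
  ∀ f : A → A, IsEnd M f → Function.Surjective f → Function.Injective f

/-- `M` is co-Hopfian: every injective endomorphism is surjective. -/
def CoHopfian (M : RAct S A) : Prop :=
  ∀ f : A → A, IsEnd M f → Function.Injective f → Function.Surjective f

/-- ACC on congruences. -/
def NoetherianAct (M : RAct S A) : Prop :=
  ∀ c : ℕ → (A → A → Prop), (∀ n, IsCong M (c n)) →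
    (∀ n a b, c n a b → c (n + 1) a b) → ∃ N, ∀ m, N ≤ m → c m = c N

/-- DCC on congruences. -/
def ArtinianAct (M : RAct S A) : Prop :=
  ∀ c : ℕ → (A → A → Prop), (∀ n, IsCong M (c n)) →
    (∀ n a b, c (n + 1) a b → c n a b) → ∃ N, ∀ m, N ≤ m → c m = c N

/-- The monoid `S` as a right act over itself. -/
def mulAct (S : Type*) [Monoid S] : RAct S S :=
  ⟨fun x s => x * s, mul_one, fun a s t => (mul_assoc a s t).symm⟩
lemma iter_range_anti {A : Type*} (f : A → A) {j k : ℕ} (h : j ≤ k) :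
    Set.range (f^[k]) ⊆ Set.range (f^[j]) := by
  rintro _ ⟨x, rfl⟩
  exact ⟨f^[k - j] x, by rw [← Function.iterate_add_apply, Nat.add_sub_cancel' h]⟩

lemma range_stab {A : Type*} (f : A → A) {n : ℕ} (hn : 1 ≤ n)
    (hsub : Set.range (f^[n]) ⊆ Set.range (f^[n + n])) :
    ∀ m, n ≤ m → Set.range (f^[m]) = Set.range (f^[n]) := by
  have key : ∀ j : ℕ, Set.range (f^[n]) ⊆ Set.range (f^[n + j * n]) := by
    intro j
    induction j with
    | zero => simp
    | succ j ih =>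
      rintro _ ⟨x, rfl⟩
      obtain ⟨c, hc⟩ := hsub ⟨x, rfl⟩
      obtain ⟨d, hd⟩ := ih ⟨c, rfl⟩
      refine ⟨d, ?_⟩
      have harith : n + (j + 1) * n = n + (n + j * n) := by ring
      rw [harith, Function.iterate_add_apply, hd, ← Function.iterate_add_apply, hc]
  intro m hm
  apply Set.Subset.antisymm (iter_range_anti f hm)
  refine (key m).trans (iter_range_anti f ?_)
  calc m = m * 1 := (mul_one m).symm
  _ ≤ m * n := Nat.mul_le_mul_left m hn
  _ ≤ n + m * n := Nat.le_add_left _ _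

lemma imC_congr {A : Type*} (f : A → A) {m n : ℕ}
    (h : Set.range (f^[m]) = Set.range (f^[n])) : imC (f^[m]) = imC (f^[n]) := by
  funext a b
  show (a = b ∨ (a ∈ Set.range (f^[m]) ∧ b ∈ Set.range (f^[m]))) =
    (a = b ∨ (a ∈ Set.range (f^[n]) ∧ b ∈ Set.range (f^[n])))
  rw [h]

/-- Strongly co-Hopfian iff the join `I_{f^n} ∨ K_{f^n}` is the full relation for some `n`. -/
theorem stmt9 (M : RAct S A) :
    StronglyCoHopfian M ↔ ∀ f : A → A, IsEnd M f →
      ∃ n : ℕ, 1 ≤ n ∧ ∀ a b : A,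
        Relation.EqvGen (fun x y => imC (f^[n]) x y ∨ kerC (f^[n]) x y) a b := by
  constructor
  · intro h f hf
    obtain ⟨n, hn1, hstab⟩ := h f hf
    refine ⟨n, hn1, ?_⟩
    -- first: range f^[n] ⊆ range f^[n+n]
    have hsub : Set.range (f^[n]) ⊆ Set.range (f^[n + n]) := by
      have imeq := hstab (n + n) (Nat.le_add_right n n)
      rintro _ ⟨x, rfl⟩
      have h1 : imC (f^[n]) (f^[n] x) (f^[n] (f^[n] x)) :=
        Or.inr ⟨⟨x, rfl⟩, ⟨f^[n] x, rfl⟩⟩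
      rw [← imeq] at h1
      rcases h1 with h1 | h1
      · exact ⟨x, by rw [Function.iterate_add_apply, ← h1]⟩
      · exact h1.1
    intro a b
    obtain ⟨c, hc⟩ := hsub ⟨a, rfl⟩
    obtain ⟨d, hd⟩ := hsub ⟨b, rfl⟩
    have h1 : kerC (f^[n]) a (f^[n] c) := by
      show f^[n] a = f^[n] (f^[n] c)
      rw [← Function.iterate_add_apply, hc]
    have h2 : imC (f^[n]) (f^[n] c) (f^[n] d) := Or.inr ⟨⟨c, rfl⟩, ⟨d, rfl⟩⟩
    have h3 : kerC (f^[n]) b (f^[n] d) := by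
      show f^[n] b = f^[n] (f^[n] d)
      rw [← Function.iterate_add_apply, hd]
    exact Relation.EqvGen.trans _ _ _ (Relation.EqvGen.rel _ _ (Or.inr h1))
      (Relation.EqvGen.trans _ _ _ (Relation.EqvGen.rel _ _ (Or.inl h2))
        (Relation.EqvGen.symm _ _ (Relation.EqvGen.rel _ _ (Or.inr h3))))
  · intro h f hf
    obtain ⟨n, hn1, hfull⟩ := h f hf
    -- any two points connected ⇒ f^[n] x always lands in range f^[n+n]
    have P : ∀ x y : A,
        Relation.EqvGen (fun x y => imC (f^[n]) x y ∨ kerC (f^[n]) x y) x y →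
        f^[n] x = f^[n] y ∨
          (f^[n] x ∈ Set.range (f^[n + n]) ∧ f^[n] y ∈ Set.range (f^[n + n])) := by
      intro x y hxy
      induction hxy with
      | rel x y hr =>
        rcases hr with hr | hr
        · rcases hr with hr | ⟨⟨u, hu⟩, ⟨v, hv⟩⟩
          · exact Or.inl (by rw [hr])
          · refine Or.inr ⟨⟨u, ?_⟩, ⟨v, ?_⟩⟩
            · rw [Function.iterate_add_apply, hu]
            · rw [Function.iterate_add_apply, hv]
        · exact Or.inl hr
      | refl x => exact Or.inl rfl
      | symm x y _ ih =>
        rcases ih with ih | ih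
        · exact Or.inl ih.symm
        · exact Or.inr ⟨ih.2, ih.1⟩
      | trans x y z _ _ ih1 ih2 =>
        rcases ih1 with ih1 | ih1 <;> rcases ih2 with ih2 | ih2
        · exact Or.inl (ih1.trans ih2)
        · exact Or.inr ⟨ih1 ▸ ih2.1, ih2.2⟩
        · exact Or.inr ⟨ih1.1, ih2 ▸ ih1.2⟩
        · exact Or.inr ⟨ih1.1, ih2.2⟩
    have hsub : Set.range (f^[n]) ⊆ Set.range (f^[n + n]) := by
      rintro _ ⟨x, rfl⟩
      by_cases hc : ∀ b, f^[n] b = f^[n] x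
      · exact ⟨x, by rw [Function.iterate_add_apply]; exact hc _⟩
      · push_neg at hc
        obtain ⟨b, hb⟩ := hc
        rcases P x b (hfull x b) with h1 | h1
        · exact (hb h1.symm).elim
        · exact h1.1
    exact ⟨n, hn1, fun m hm => imC_congr f (range_stab f hn1 hsub m hm)⟩
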